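/- Let p : E → S be a pre-cohesive geometric morphism. If p has the Connected Interval property (p_!(p^! 2) ≅ 1, where 2 = 1 + 1), then for every object B of S the sliced local essential geometric morphism p/B : E/p*B → S/B also has the Connected Interval property; in particular (p/B)_! ((p/B)^! 2) ≅ 1 in S/B. -/

import Mathlib

open CategoryTheory CategoryTheory.Limits

/-- A morphism `i : X ⟶ Z` is a (binary coproduct) summand if there is a morphism
`j : Y ⟶ Z` such that the cospan `X ⟶ Z ⟵ Y` is a coproduct cocone. -/
def IsSummand {C : Type*} [Category C] {X Z : C} (i : X ⟶ Z) : Prop :=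
  ∃ (Y : C) (j : Y ⟶ Z), Nonempty (IsColimit (BinaryCofan.mk i j))

/-- An object `X` is decidable if its diagonal `X ⟶ X ⨯ X` is a coproduct summand. -/
noncomputable def IsDecidableObj {C : Type*} [Category C] [HasBinaryProducts C] (X : C) : Prop :=
  IsSummand (diag X)

/-- A subobject classifier. -/
structure Classifier (C : Type*) [Category C] [HasTerminal C] where
  Ω : C
  truth : ⊤_ C ⟶ Ω
  char : ∀ {U X : C} (m : U ⟶ X), Mono m → (X ⟶ Ω)
  isPullback : ∀ {U X : C} (m : U ⟶ X) (hm : Mono m),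
    IsPullback m (terminal.from U) (char m hm) truth
  uniq : ∀ {U X : C} (m : U ⟶ X) (hm : Mono m) (c : X ⟶ Ω),
    IsPullback m (terminal.from U) c truth → c = char m hm

/-- An elementary topos: finite limits, cartesian closedness (each functor `X ⨯ -` is a
left adjoint) and a subobject classifier. -/
def IsElemTopos (C : Type*) [Category C] [HasFiniteLimits C] : Prop :=
  (∀ X : C, (prod.functor.obj X).IsLeftAdjoint) ∧ Nonempty (_root_.Classifier C)
/-- If a pre-cohesive geometric morphism `p : E → S` has the Connected Interval property
(`pShriek (pUpper 2) ≅ 1` where `2 = 1 + 1`), then for every `B : S` the sliced geometric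
morphism `p/B` also has the Connected Interval property: using the identifications
`(p/B)^! 2 ≅ (π₁ : pUpper 2 ⨯ pStar B ⟶ pStar B)` and
`(p/B)_! (f : X ⟶ pStar B) ≅ (pShriek X ⟶ pShriek (pStar B) ⟶ B)`, the object
`(p/B)_! ((p/B)^! 2)` of `S/B` is isomorphic to the terminal object `𝟙 B` of `S/B`. -/
theorem connected_interval_stable_under_slicing
    {E S : Type*} [Category E] [Category S]
    [HasFiniteLimits E] [HasFiniteColimits E] [HasFiniteLimits S] [HasFiniteColimits S]
    (hE : IsElemTopos E) (hS : IsElemTopos S)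
    (pShriek : E ⥤ S) (pStar : S ⥤ E) (pLower : E ⥤ S) (pUpper : S ⥤ E)
    (adjShriekStar : pShriek ⊣ pStar) (adjStarLow : pStar ⊣ pLower)
    (adjLowUp : pLower ⊣ pUpper)
    [PreservesFiniteLimits pStar]
    [pStar.Full] [pStar.Faithful] [pUpper.Full] [pUpper.Faithful]
    (hcounit : ∀ X : E, Mono (adjStarLow.counit.app X))
    [PreservesFiniteProducts pShriek]
    -- the Connected Interval property for `p`
    (hCI : Nonempty (pShriek.obj (pUpper.obj ((⊤_ S) ⨿ (⊤_ S))) ≅ ⊤_ S)) :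
    -- the Connected Interval property for each slice `p/B`
    ∀ B : S,
      Nonempty (Over.mk
          (pShriek.map
              (prod.snd : pUpper.obj ((⊤_ S) ⨿ (⊤_ S)) ⨯ pStar.obj B ⟶ pStar.obj B) ≫
            adjShriekStar.counit.app B) ≅
        Over.mk (𝟙 B)) := by
  intro B
  obtain ⟨h⟩ := hCI
  set I := pUpper.obj ((⊤_ S) ⨿ (⊤_ S))
  -- the counit component is an iso since `pStar` is fully faithful
  haveI : IsIso (adjShriekStar.counit.app B) := inferInstance
  -- `pShriek.map prod.snd` is an iso
  haveI : IsIso (prodComparison pShriek I (pStar.obj B)) :=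
    ⟨(PreservesLimitPair.iso pShriek I (pStar.obj B)).inv,
      (PreservesLimitPair.iso pShriek I (pStar.obj B)).hom_inv_id,
      (PreservesLimitPair.iso pShriek I (pStar.obj B)).inv_hom_id⟩
  have hsnd : (prod.snd : pShriek.obj I ⨯ pShriek.obj (pStar.obj B) ⟶ _) ≫
      prod.lift (terminal.from _ ≫ h.inv) (𝟙 _) = 𝟙 _ := by
    apply Limits.prod.hom_ext
    · simp only [Category.assoc, prod.lift_fst, Category.id_comp]
      rw [← cancel_mono h.hom]
      simp only [Category.assoc, Iso.inv_hom_id, Category.comp_id]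
      apply Subsingleton.elim
    · simp only [Category.assoc, prod.lift_snd, Category.comp_id, Category.id_comp]
  have hiso : IsIso (pShriek.map (prod.snd : I ⨯ pStar.obj B ⟶ pStar.obj B)) := by
    refine ⟨prod.lift (terminal.from _ ≫ h.inv) (𝟙 _) ≫
      inv (prodComparison pShriek I (pStar.obj B)), ?_, ?_⟩
    · rw [← prodComparison_snd, Category.assoc, ← Category.assoc
        (prod.snd : pShriek.obj I ⨯ pShriek.obj (pStar.obj B) ⟶ _),
        hsnd, Category.id_comp, IsIso.hom_inv_id]
    · rw [Category.assoc, ← prodComparison_snd, IsIso.inv_hom_id_assoc,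
        prod.lift_snd]
  haveI := hiso
  exact ⟨Over.isoMk (asIso (pShriek.map (prod.snd : I ⨯ pStar.obj B ⟶ pStar.obj B) ≫
    adjShriekStar.counit.app B)) (by simp)⟩
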